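/- arXiv:0901.0869 — 2 statements merged into one kernel-verified Lean document; each statement's English description precedes it below -/
import Mathlib

section
/- Let ℛ and 𝒮 be linear growing TRSs over 𝓕 and let 𝒟'(ℛ,𝒮) be the powerset-pair automaton built from 𝒞'_{RS_{𝒮°}}(ℛ). For every s ∈ 𝒯(𝓕): if s →_{Γ_{𝒟'}}* [S,P] then for every redex position p of s there exists a state q ∈ P with q ∈ s[(s|_p)°]_p↓. -/
set_option maxHeartbeats 1000000

/-! ## Terms over a signature -/

/-- Terms over a signature given by a type `F` of function symbols together with
an arity function `ar`; variables are natural numbers. -/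
inductive Term (F : Type) (ar : F → ℕ) : Type
  | var : ℕ → Term F ar
  | app : (f : F) → (Fin (ar f) → Term F ar) → Term F ar

namespace Term

variable {F : Type} {ar : F → ℕ}

/-- The (finite) set of variables of a term. -/
def vars : Term F ar → Finset ℕ
  | var n => {n}
  | app _ ts => Finset.univ.biUnion fun i => (ts i).vars

/-- A term is ground if it contains no variables. -/
def Ground (t : Term F ar) : Prop := t.vars = ∅

/-- The number of occurrences of the variable `n` in a term. -/
def count (n : ℕ) : Term F ar → ℕ
  | var m => if m = n then 1 else 0
  | app _ ts => ∑ i, (ts i).count n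

/-- A term is linear if no variable occurs twice in it. -/
def Linear (t : Term F ar) : Prop := ∀ n, t.count n ≤ 1

/-- Applying a substitution to a term. -/
def subst (σ : ℕ → Term F ar) : Term F ar → Term F ar
  | var n => σ n
  | app f ts => app f fun i => (ts i).subst σ

/-- The subterm at a position (a list of argument indices), if the position is valid. -/
def subtermAt : Term F ar → List ℕ → Option (Term F ar)
  | t, [] => some t
  | var _, _ :: _ => none
  | app f ts, i :: p => if h : i < ar f then (ts ⟨i, h⟩).subtermAt p else none

/-- Replacing the subterm at a position, if the position is valid. -/
def replaceAt : Term F ar → List ℕ → Term F ar → Option (Term F ar)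
  | _, [], u => some u
  | var _, _ :: _, _ => none
  | app f ts, i :: p, u =>
      if h : i < ar f then
        ((ts ⟨i, h⟩).replaceAt p u).map fun s => app f (Function.update ts ⟨i, h⟩ s)
      else none

/-- `s.IsSubtermOf t` : `s` is a subterm of `t`. -/
def IsSubtermOf (s t : Term F ar) : Prop := ∃ p, t.subtermAt p = some s

/-- Relabelling of function symbols along an arity-preserving map of signatures. -/
def relabel {G : Type} {arG : G → ℕ} (φ : F → G) (h : ∀ f, arG (φ f) = ar f) :
    Term F ar → Term G arG
  | var n => var n
  | app f ts => app (φ f) fun i => (ts (Fin.cast (h f) i)).relabel φ h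

end Term

/-! ## Rewriting -/

/-- One-step rewriting with a set of rewrite rules: there are a position `p` of `s`,
a rule `(l, r)` and a substitution `σ` with `s|_p = lσ` and `t = s[rσ]_p`. -/
def Rewrites {F : Type} {ar : F → ℕ} (R : Set (Term F ar × Term F ar))
    (s t : Term F ar) : Prop :=
  ∃ (p : List ℕ) (l r : Term F ar) (σ : ℕ → Term F ar),
    (l, r) ∈ R ∧ s.subtermAt p = some (l.subst σ) ∧ s.replaceAt p (r.subst σ) = some t

/-- Many-step rewriting (reflexive–transitive closure). -/
abbrev RewritesStar {F : Type} {ar : F → ℕ} (R : Set (Term F ar × Term F ar)) :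
    Term F ar → Term F ar → Prop :=
  Relation.ReflTransGen (Rewrites R)

/-- A term rewriting system: a finite set of rules whose left-hand sides are not variables. -/
structure TRS (F : Type) (ar : F → ℕ) where
  rules : Set (Term F ar × Term F ar)
  finite : rules.Finite
  lhs_not_var : ∀ lr ∈ rules, ∀ n, lr.1 ≠ Term.var n

namespace TRS

variable {F : Type} {ar : F → ℕ}

def LeftLinear (R : TRS F ar) : Prop := ∀ lr ∈ R.rules, lr.1.Linear

def RightLinear (R : TRS F ar) : Prop := ∀ lr ∈ R.rules, lr.2.Linear

/-- A TRS is linear if all left- and right-hand sides are linear terms. -/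
def IsLinear (R : TRS F ar) : Prop := R.LeftLinear ∧ R.RightLinear

/-- A TRS is growing if every variable occurring both in the left- and the right-hand
side of a rule occurs at depth 1 in the left-hand side. -/
def Growing (R : TRS F ar) : Prop :=
  ∀ lr ∈ R.rules, ∀ n ∈ lr.1.vars, n ∈ lr.2.vars →
    ∀ (f : F) (ts : Fin (ar f) → Term F ar), lr.1 = Term.app f ts →
      ∀ i, n ∈ (ts i).vars → ts i = Term.var n

/-- A redex is an instance of a left-hand side. -/
def IsRedex (R : TRS F ar) (s : Term F ar) : Prop :=
  ∃ lr ∈ R.rules, ∃ σ : ℕ → Term F ar, s = lr.1.subst σ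

/-- `p` is a redex position of `s`. -/
def RedexPos (R : TRS F ar) (s : Term F ar) (p : List ℕ) : Prop :=
  ∃ u, s.subtermAt p = some u ∧ R.IsRedex u

def Reducible (R : TRS F ar) (s : Term F ar) : Prop := ∃ p, R.RedexPos s p

/-- A term is root-stable if it cannot be rewritten to a redex. -/
def RootStable (R : TRS F ar) (s : Term F ar) : Prop :=
  ¬ ∃ t, RewritesStar R.rules s t ∧ R.IsRedex t

/-- Ground normal forms. -/
def NFset (R : TRS F ar) : Set (Term F ar) := { t | t.Ground ∧ ¬ R.Reducible t }

/-- Ground redexes. -/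
def RedexSet (R : TRS F ar) : Set (Term F ar) := { t | t.Ground ∧ R.IsRedex t }

/-- Root-stable ground terms. -/
def RSset (R : TRS F ar) : Set (Term F ar) := { t | t.Ground ∧ R.RootStable t }

/-- Relabelling a TRS along an arity-preserving map of signatures. -/
def relabel {G : Type} {arG : G → ℕ} (R : TRS F ar) (φ : F → G)
    (h : ∀ f, arG (φ f) = ar f) : TRS G arG where
  rules := (fun lr => (lr.1.relabel φ h, lr.2.relabel φ h)) '' R.rules
  finite := R.finite.image _
  lhs_not_var := by
    rintro lr ⟨lr0, h0, rfl⟩ n hn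
    dsimp only at hn
    cases h1 : lr0.1 with
    | var m => exact absurd h1 (R.lhs_not_var lr0 h0 m)
    | app f ts =>
        rw [h1] at hn
        simp only [Term.relabel] at hn
        cases hn

end TRS

/-! ## Tree automata -/

/-- A transition rule `f(q₁,…,qₙ) → q` of a bottom-up tree automaton. -/
abbrev TARule (F : Type) (ar : F → ℕ) (Q : Type) : Type :=
  (f : F) × ((Fin (ar f) → Q) × Q)

/-- A (finite bottom-up) tree automaton without ε-transitions. -/
structure TreeAutomaton (F : Type) (ar : F → ℕ) (Q : Type) where
  trans : Set (TARule F ar Q)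
  final : Set Q

/-- `Reaches Δ t q` : the ground term `t` rewrites to the state `q` using the
transition rules `Δ`. -/
inductive Reaches {F : Type} {ar : F → ℕ} {Q : Type} (Δ : Set (TARule F ar Q)) :
    Term F ar → Q → Prop
  | app {f : F} {ts : Fin (ar f) → Term F ar} {qs : Fin (ar f) → Q} {q : Q} :
      (∀ i, Reaches Δ (ts i) (qs i)) → (⟨f, qs, q⟩ : TARule F ar Q) ∈ Δ →
      Reaches Δ (Term.app f ts) q

/-- `ReachesT Δ θ t q` : the term `t`, whose variables are interpreted as the states
given by `θ`, rewrites to the state `q` using the transition rules `Δ`. -/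
inductive ReachesT {F : Type} {ar : F → ℕ} {Q : Type} (Δ : Set (TARule F ar Q))
    (θ : ℕ → Q) : Term F ar → Q → Prop
  | var (n : ℕ) : ReachesT Δ θ (Term.var n) (θ n)
  | app {f : F} {ts : Fin (ar f) → Term F ar} {qs : Fin (ar f) → Q} {q : Q} :
      (∀ i, ReachesT Δ θ (ts i) (qs i)) → (⟨f, qs, q⟩ : TARule F ar Q) ∈ Δ →
      ReachesT Δ θ (Term.app f ts) q

/-- The language of a tree automaton: all ground terms reaching a final state. -/
def Lang {F : Type} {ar : F → ℕ} {Q : Type} (A : TreeAutomaton F ar Q) :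
    Set (Term F ar) :=
  { t | t.Ground ∧ ∃ q ∈ A.final, Reaches A.trans t q }

/-- A set of ground terms is recognizable if it is the language of some finite
tree automaton. -/
def Recognizable {F : Type} {ar : F → ℕ} (T : Set (Term F ar)) : Prop :=
  ∃ (Q : Type) (_ : Fintype Q) (A : TreeAutomaton F ar Q), T = Lang A

/-- The set of states occurring in a set of transition rules. -/
def statesOf {F : Type} {ar : F → ℕ} {Q : Type} (Γ : Set (TARule F ar Q)) : Set Q :=
  { q | ∃ ρ ∈ Γ, ρ.2.2 = q ∨ ∃ i, ρ.2.1 i = q }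

/-! ## The automaton `ℬ(ℛ)` -/

/-- The canonical representative of the state `⟨t⟩` of `ℬ(ℛ)`: all variables are
identified with the single state `⟨x⟩`, represented by `var 0`. -/
def stPattern {F : Type} {ar : F → ℕ} : Term F ar → Term F ar
  | Term.var _ => Term.var 0
  | Term.app f ts => Term.app f ts

/-- `S_ℛ`: the set of all subterms of arguments of left-hand sides of `ℛ`. -/
def SR {F : Type} {ar : F → ℕ} (R : TRS F ar) : Set (Term F ar) :=
  { s | ∃ lr ∈ R.rules, ∃ (f : F) (ts : Fin (ar f) → Term F ar),
        lr.1 = Term.app f ts ∧ ∃ i, s.IsSubtermOf (ts i) }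

/-- The representatives of the states of `ℬ(ℛ)`: the patterns of terms of `S_ℛ`,
together with `⟨x⟩`. -/
def BStateSet {F : Type} {ar : F → ℕ} (R : TRS F ar) : Set (Term F ar) :=
  stPattern '' SR R ∪ {Term.var 0}

/-- The matching rules of `ℬ(ℛ)` (with states encoded by `enc`):
`f(⟨t₁⟩,…,⟨tₙ⟩) → ⟨t⟩` for every `t = f(t₁,…,tₙ) ∈ S_ℛ`. -/
def BMatch {F : Type} {ar : F → ℕ} {Q : Type} (R : TRS F ar) (enc : Term F ar → Q) :
    Set (TARule F ar Q) :=
  { ρ | ∃ (f : F) (ts : Fin (ar f) → Term F ar), Term.app f ts ∈ SR R ∧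
        ρ = ⟨f, fun i => enc (stPattern (ts i)), enc (Term.app f ts)⟩ }

/-- The propagation rules `f(⟨x⟩,…,⟨x⟩) → ⟨x⟩` for every function symbol `f`. -/
def BProp {F : Type} {ar : F → ℕ} {Q : Type} (enc : Term F ar → Q) :
    Set (TARule F ar Q) :=
  { ρ | ∃ f : F, ρ = ⟨f, fun _ => enc (Term.var 0), enc (Term.var 0)⟩ }

/-- The transition rules of the automaton `ℬ(ℛ)`. -/
def BTrans {F : Type} {ar : F → ℕ} {Q : Type} (R : TRS F ar) (enc : Term F ar → Q) :
    Set (TARule F ar Q) :=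
  BMatch R enc ∪ BProp enc

/-- `Σ(t)`: the set of ground instances of the term `t`. -/
def GInst {F : Type} {ar : F → ℕ} (t : Term F ar) : Set (Term F ar) :=
  { s | s.Ground ∧ ∃ σ, s = t.subst σ }

/-! ## Saturation -/

/-- The state `qᵢ` associated to the argument `lᵢ` of a left-hand side in the
saturation rule: `lᵢθ` if `lᵢ` is a variable occurring in `r` (whose variable set
is `rv`), and `⟨lᵢ⟩` otherwise. -/
def satArg {F : Type} {ar : F → ℕ} {Q : Type} (enc : Term F ar → Q) (θ : ℕ → Q)
    (rv : Finset ℕ) : Term F ar → Q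
  | Term.var n => if n ∈ rv then θ n else enc (Term.var 0)
  | Term.app f ts => enc (Term.app f ts)

/-- One step of the saturation process: add all transition rules `f(q₁,…,qₙ) → q`
obtained from a rewrite rule `f(l₁,…,lₙ) → r` and a state substitution `θ`
(with values among the states `Qc` of the automaton) such that `rθ →_Γ* q`. -/
def satStep {F : Type} {ar : F → ℕ} {Q : Type} (R : TRS F ar) (enc : Term F ar → Q)
    (Qc : Set Q) (Γ : Set (TARule F ar Q)) : Set (TARule F ar Q) :=
  Γ ∪ { ρ | ∃ (f : F) (ls : Fin (ar f) → Term F ar) (r : Term F ar) (θ : ℕ → Q) (q : Q),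
        (Term.app f ls, r) ∈ R.rules ∧ (∀ n ∈ r.vars, θ n ∈ Qc) ∧ ReachesT Γ θ r q ∧
        ρ = ⟨f, fun i => satArg enc θ r.vars (ls i), q⟩ }

/-- The saturated set of transition rules: the closure of `Γ0` under the saturation
inference rule. -/
def satGamma {F : Type} {ar : F → ℕ} {Q : Type} (R : TRS F ar) (enc : Term F ar → Q)
    (Qc : Set Q) (Γ0 : Set (TARule F ar Q)) : Set (TARule F ar Q) :=
  ⋃ n, (satStep R enc Qc)^[n] Γ0

/-! ## The automaton `𝒞_T(ℛ)` and its extension `𝒞'_T(ℛ)` -/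

/-- The data of the construction of the automaton `𝒞_T(ℛ)`: an automaton `𝒜_T`
recognizing `T` with all states accessible and state set `QA`, together with an
encoding `enc` of the states `⟨t⟩` of `ℬ(ℛ)` into the common state type `Q`, such
that every state common to `𝒜_T` and `ℬ(ℛ)` accepts the same set of terms in both
automata. -/
structure CSetup {G : Type} [Fintype G] {arG : G → ℕ} (Q : Type) [Fintype Q]
    (Rg : TRS G arG) (T : Set (Term G arG)) where
  enc : Term G arG → Q
  A : TreeAutomaton G arG Q
  QA : Set Q
  henc : Set.InjOn enc (BStateSet Rg)
  hAstates : ∀ ρ ∈ A.trans, ρ.2.2 ∈ QA ∧ ∀ i, ρ.2.1 i ∈ QA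
  hfinal : A.final ⊆ QA
  hacc : ∀ q ∈ QA, ∃ s : Term G arG, s.Ground ∧ Reaches A.trans s q
  hground : ∃ s : Term G arG, s.Ground
  hshared : ∀ q ∈ QA ∩ enc '' BStateSet Rg, ∀ s : Term G arG,
      Reaches A.trans s q ↔ Reaches (BTrans Rg enc) s q
  hT : T = Lang A

namespace CSetup

variable {G : Type} [Fintype G] {arG : G → ℕ} {Q : Type} [Fintype Q]
  {Rg : TRS G arG} {T : Set (Term G arG)}

/-- The set of states of the automaton `𝒞_T(ℛ)`. -/
def Qstates (C : CSetup Q Rg T) : Set Q := C.QA ∪ C.enc '' BStateSet Rg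

/-- The transition rules of `𝒞_T(ℛ)` before saturation: the union of `𝒜_T` and `ℬ(ℛ)`. -/
def Γ0 (C : CSetup Q Rg T) : Set (TARule G arG Q) := C.A.trans ∪ BTrans Rg C.enc

/-- The transition rules of `𝒞_T(ℛ)` after saturation. -/
def Γsat (C : CSetup Q Rg T) : Set (TARule G arG Q) :=
  satGamma Rg C.enc C.Qstates C.Γ0

end CSetup

/-- The redex rules `f(⟪l₁⟫,…,⟪lₙ⟫) → q_r` for every left-hand side `f(l₁,…,lₙ)`. -/
def RedexRules {F : Type} {ar : F → ℕ} {Q : Type} (R : TRS F ar)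
    (enc2 : Term F ar → Q) (qr : Q) : Set (TARule F ar Q) :=
  { ρ | ∃ (f : F) (ls : Fin (ar f) → Term F ar) (r : Term F ar),
        (Term.app f ls, r) ∈ R.rules ∧
        ρ = ⟨f, fun i => enc2 (stPattern (ls i)), qr⟩ }

/-- The rules `f(⟨x⟩,…,q_r,…,⟨x⟩) → q_r`. -/
def QrProp {F : Type} {ar : F → ℕ} {Q : Type} (enc : Term F ar → Q) (qr : Q) :
    Set (TARule F ar Q) :=
  { ρ | ∃ (f : F) (j : Fin (ar f)),
        ρ = ⟨f, fun i => if i = j then qr else enc (Term.var 0), qr⟩ }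

/-- The data of the construction of the automaton `𝒞'_T(ℛ)`: `𝒞_T(ℛ)` extended with
a fresh copy `⟪t⟫` (encoded by `enc2`, with `⟪x⟫ = ⟨x⟩`) of the states of `ℬ(ℛ)` and
a fresh state `q_r`. -/
structure CpSetup {G : Type} [Fintype G] {arG : G → ℕ} (Q : Type) [Fintype Q]
    (Rg : TRS G arG) (T : Set (Term G arG)) extends CSetup Q Rg T where
  enc2 : Term G arG → Q
  qr : Q
  henc2 : Set.InjOn enc2 (BStateSet Rg)
  hx : enc2 (Term.var 0) = enc (Term.var 0)
  hfresh : (enc2 '' (BStateSet Rg \ {Term.var 0}) ∪ {qr}) ∩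
              (QA ∪ enc '' BStateSet Rg) = ∅
  hqr : qr ∉ enc2 '' (BStateSet Rg \ {Term.var 0})

namespace CpSetup

variable {G : Type} [Fintype G] {arG : G → ℕ} {Q : Type} [Fintype Q]
  {Rg : TRS G arG} {T : Set (Term G arG)}

/-- The transition rules `Γ'` of the automaton `𝒞'_T(ℛ)`. -/
def Γ' (C : CpSetup Q Rg T) : Set (TARule G arG Q) :=
  C.toCSetup.Γsat ∪ BMatch Rg C.enc2 ∪ RedexRules Rg C.enc2 C.qr ∪ QrProp C.enc C.qr

end CpSetup

/-! ## The signature `𝓖 = 𝓕 ∪ {•}` -/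

/-- The arity function of the extended signature `𝓕 ∪ {•}` (with `•` the fresh
constant `none`). -/
def arB {F : Type} (ar : F → ℕ) : Option F → ℕ
  | none => 0
  | some f => ar f

/-- The term `•`. -/
def bulletTm {F : Type} {ar : F → ℕ} : Term (Option F) (arB ar) :=
  Term.app none Fin.elim0

/-- The embedding of `𝒯(𝓕)`-terms into terms over `𝓕 ∪ {•}`. -/
def liftB {F : Type} {ar : F → ℕ} : Term F ar → Term (Option F) (arB ar) :=
  Term.relabel some (fun _ => rfl)

/-- A TRS over `𝓕` viewed as a TRS over `𝓕 ∪ {•}`. -/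
def TRS.liftB {F : Type} {ar : F → ℕ} (R : TRS F ar) : TRS (Option F) (arB ar) :=
  R.relabel some (fun _ => rfl)

/-- The TRS `ℛ• = ℛ ∪ {• → •}` over the signature `𝓕 ∪ {•}`. -/
def TRS.bullet {F : Type} {ar : F → ℕ} (R : TRS F ar) : TRS (Option F) (arB ar) where
  rules := R.liftB.rules ∪ {(bulletTm, bulletTm)}
  finite := R.liftB.finite.union (Set.finite_singleton _)
  lhs_not_var := by
    rintro lr (h | h) n hn
    · exact R.liftB.lhs_not_var lr h n hn
    · rw [Set.mem_singleton_iff] at h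
      rw [h] at hn
      cases hn

/-! ## The automaton `𝒟(ℛ)` -/

/-- For a symbol `g` and sets of states `Ss` for the arguments, the set
`g(S₁,…,Sₙ)↓` of states reachable from `g` applied to states chosen from the `Ssᵢ`. -/
def oneStep {G : Type} {arG : G → ℕ} {Q : Type} (Γ : Set (TARule G arG Q)) (g : G)
    (Ss : Fin (arG g) → Set Q) : Set Q :=
  { q | ∃ qs : Fin (arG g) → Q, (∀ i, qs i ∈ Ss i) ∧ (⟨g, qs, q⟩ : TARule G arG Q) ∈ Γ }

/-- `t↓` for a ground term `t`: the set of states reachable from `t`. -/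
def dn {G : Type} {arG : G → ℕ} {Q : Type} (Γ : Set (TARule G arG Q))
    (t : Term G arG) : Set Q :=
  { q | Reaches Γ t q }

/-- There is a rewrite rule with left-hand side `g(l₁,…,lₙ)` such that
`⟪lᵢ⟫ ∈ Ssᵢ` for all `i`. -/
def LhsMatch {G : Type} {arG : G → ℕ} {Q : Type} (Rg : TRS G arG)
    (enc2 : Term G arG → Q) (g : G) (Ss : Fin (arG g) → Set Q) : Prop :=
  ∃ (ls : Fin (arG g) → Term G arG) (r : Term G arG),
    (Term.app g ls, r) ∈ Rg.rules ∧ ∀ i, enc2 (stPattern (ls i)) ∈ Ss i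

/-- The transition rules of the automaton `𝒟(ℛ)` over `𝓕`, built from the transition
rules `Γ'` of `𝒞'_{NF}(ℛ)` over `𝓕 ∪ {•}`. -/
def DTrans {F : Type} {ar : F → ℕ} {Q : Type} (Rb : TRS (Option F) (arB ar))
    (Γ' : Set (TARule (Option F) (arB ar) Q))
    (enc enc2 : Term (Option F) (arB ar) → Q) :
    Set (TARule F ar (Set Q × Set Q)) :=
  { ρ | ∃ (f : F) (SP : Fin (ar f) → Set Q × Set Q) (P1 P2 : Set Q),
      P1 ⊆ (⋃ i : Fin (ar f), oneStep Γ' (some f)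
              (fun (j : Fin (ar f)) => if j = i then (SP j).2 else (SP j).1)) ∧
      (∀ (i : Fin (ar f)), ∀ q ∈ (SP i).2,
        (P1 ∩ oneStep Γ' (some f) (fun (j : Fin (ar f)) => if j = i then {q} else (SP j).1)).Nonempty) ∧
      ((LhsMatch Rb enc2 (some f) (fun i => (SP i).1) ∧ P2 = {enc (Term.var 0)}) ∨
       (¬ LhsMatch Rb enc2 (some f) (fun i => (SP i).1) ∧ P2 = (∅ : Set Q))) ∧
      ρ = ⟨f, SP, (oneStep Γ' (some f) (fun i => (SP i).1), P1 ∪ P2)⟩ }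

/-- The automaton `𝒟(ℛ)`: final states are the pairs `[S,P]` with `q_r ∈ S` and
`P ⊆ Q_f`. -/
def DAutomaton {F : Type} {ar : F → ℕ} {Q : Type} (Rb : TRS (Option F) (arB ar))
    (Γ' : Set (TARule (Option F) (arB ar) Q))
    (enc enc2 : Term (Option F) (arB ar) → Q) (qr : Q) (Qf : Set Q) :
    TreeAutomaton F ar (Set Q × Set Q) where
  trans := DTrans Rb Γ' enc enc2
  final := { SP | qr ∈ SP.1 ∧ SP.2 ⊆ Qf }

/-! ## Growing approximations -/

/-- `VarRepl t t'` : `t'` is obtained from `t` by replacing occurrences of variables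
by (possibly other) variables. -/
inductive VarRepl {F : Type} {ar : F → ℕ} : Term F ar → Term F ar → Prop
  | var (n m : ℕ) : VarRepl (Term.var n) (Term.var m)
  | app (f : F) (ts ts' : Fin (ar f) → Term F ar) :
      (∀ i, VarRepl (ts i) (ts' i)) → VarRepl (Term.app f ts) (Term.app f ts')

/-- `Rg` is a growing approximation of `R`: a right-linear growing TRS obtained from
`R` by replacing, in each right-hand side, occurrences of variables by variables not
occurring in the corresponding left-hand side. -/
def IsGrowingApprox {F : Type} {ar : F → ℕ} (R Rg : TRS F ar) : Prop :=
  Rg.RightLinear ∧ Rg.Growing ∧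
  (∀ lr ∈ Rg.rules, ∃ lr' ∈ R.rules, lr.1 = lr'.1 ∧ VarRepl lr'.2 lr.2 ∧
      ∀ n ∈ lr.2.vars, n ∉ lr.1.vars) ∧
  (∀ lr ∈ R.rules, ∃ lr' ∈ Rg.rules, lr.1 = lr'.1 ∧ VarRepl lr.2 lr'.2 ∧
      ∀ n ∈ lr'.2.vars, n ∉ lr'.1.vars)

/-! ## The signature `𝓖 = 𝓕 ∪ {f° : f ∈ 𝓕}` -/

/-- The arity function of the signature `𝓕 ∪ {f° : f ∈ 𝓕}` (`inl f` is `f`,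
`inr f` is `f°`). -/
def arC {F : Type} (ar : F → ℕ) : F ⊕ F → ℕ
  | Sum.inl f => ar f
  | Sum.inr f => ar f

/-- The embedding of `𝒯(𝓕)`-terms into terms over `𝓕 ∪ {f° : f ∈ 𝓕}`. -/
def liftC {F : Type} {ar : F → ℕ} : Term F ar → Term (F ⊕ F) (arC ar) :=
  Term.relabel Sum.inl (fun _ => rfl)

/-- `t°`: mark the root symbol of `t`. -/
def circTm {F : Type} {ar : F → ℕ} : Term F ar → Term (F ⊕ F) (arC ar)
  | Term.var n => Term.var n
  | Term.app f ts => Term.app (Sum.inr f) fun i => liftC (ts i)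

/-- A TRS over `𝓕` viewed as a TRS over `𝓕 ∪ {f° : f ∈ 𝓕}`. -/
def TRS.liftC {F : Type} {ar : F → ℕ} (R : TRS F ar) : TRS (F ⊕ F) (arC ar) :=
  R.relabel Sum.inl (fun _ => rfl)

/-- The TRS `𝒮° = 𝒮 ∪ {l° → r | l → r ∈ 𝒮}` over the signature `𝓕 ∪ {f° : f ∈ 𝓕}`. -/
def TRS.circ {F : Type} {ar : F → ℕ} (S : TRS F ar) : TRS (F ⊕ F) (arC ar) where
  rules := S.liftC.rules ∪ (fun lr => (circTm lr.1, _root_.liftC lr.2)) '' S.rules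
  finite := S.liftC.finite.union (S.finite.image _)
  lhs_not_var := by
    rintro lr (h | ⟨lr0, h0, rfl⟩) n hn
    · exact S.liftC.lhs_not_var lr h n hn
    · dsimp only at hn
      cases h1 : lr0.1 with
      | var m => exact absurd h1 (S.lhs_not_var lr0 h0 m)
      | app f ts =>
          rw [h1] at hn
          simp only [circTm] at hn
          cases hn

/-- The transitions added to `ℬ(𝒮°)` to obtain `𝒜_{REDEX_{𝒮°}}`:
`f(⟨l₁⟩,…,⟨lₙ⟩) → q_f` and `f°(⟨l₁⟩,…,⟨lₙ⟩) → q_f` for each left-hand side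
`f(l₁,…,lₙ)` of a rule of `𝒮`. -/
def CircRedexRules {F : Type} {ar : F → ℕ} {Q : Type} (S : TRS F ar)
    (enc : Term (F ⊕ F) (arC ar) → Q) (qf : Q) : Set (TARule (F ⊕ F) (arC ar) Q) :=
  { ρ | ∃ (f : F) (ls : Fin (ar f) → Term F ar) (r : Term F ar),
      (Term.app f ls, r) ∈ S.rules ∧
      (ρ = ⟨Sum.inl f, fun i => enc (stPattern (liftC (ls i))), qf⟩ ∨
       ρ = ⟨Sum.inr f, fun i => enc (stPattern (liftC (ls i))), qf⟩) }

/-! ## The automaton `𝒟'(ℛ,𝒮)` -/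

/-- The data of the construction of `𝒞'_{RS_{𝒮°}}(ℛ)`: the saturated automaton
`𝒞_{RS_{𝒮°}}(ℛ)`, a fresh copy `⟪t⟫` (encoded by `enc2`, with `⟪x⟫ = ⟨x⟩`) of the
states of `ℬ(ℛ)`, and an automaton `𝒞_{REDEX_𝒮}(𝒮)` (transitions `Etrans`, final
states `Qf'`) recognizing the non-`𝒮`-root-stable ground terms of `𝒯(𝓕)`. -/
structure CrsSetup {F : Type} [Fintype F] {ar : F → ℕ} (Q : Type) [Fintype Q]
    (R S : TRS F ar) extends CSetup Q R.liftC (TRS.RSset S.circ) where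
  enc2 : Term (F ⊕ F) (arC ar) → Q
  henc2 : Set.InjOn enc2 (BStateSet R.liftC)
  hx : enc2 (Term.var 0) = enc (Term.var 0)
  hfresh2 : (enc2 '' (BStateSet R.liftC \ {Term.var 0})) ∩
              (QA ∪ enc '' BStateSet R.liftC) = ∅
  Etrans : Set (TARule (F ⊕ F) (arC ar) Q)
  Qf' : Set Q
  hQf' : Qf' ⊆ statesOf Etrans
  hEfresh : statesOf Etrans ∩
      (QA ∪ enc '' BStateSet R.liftC ∪ enc2 '' (BStateSet R.liftC \ {Term.var 0})) = ∅
  hE : ∀ t : Term (F ⊕ F) (arC ar),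
      (t.Ground ∧ ∃ q ∈ Qf', Reaches Etrans t q) ↔
      (∃ s : Term F ar, t = liftC s ∧ s.Ground ∧ ¬ S.RootStable s)

namespace CrsSetup

variable {F : Type} [Fintype F] {ar : F → ℕ} {Q : Type} [Fintype Q] {R S : TRS F ar}

/-- The transition rules `Γ'` of the automaton `𝒞'_{RS_{𝒮°}}(ℛ)`. -/
def Γ' (C : CrsSetup Q R S) : Set (TARule (F ⊕ F) (arC ar) Q) :=
  C.toCSetup.Γsat ∪ BMatch R.liftC C.enc2 ∪ C.Etrans

end CrsSetup

/-- The transition rules of the automaton `𝒟'(ℛ,𝒮)` over `𝓕`, built from the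
transition rules `Γ'` of `𝒞'_{RS_{𝒮°}}(ℛ)`. -/
def DTransRS {F : Type} {ar : F → ℕ} {Q : Type} (Rg : TRS (F ⊕ F) (arC ar))
    (Γ' : Set (TARule (F ⊕ F) (arC ar) Q)) (enc2 : Term (F ⊕ F) (arC ar) → Q) :
    Set (TARule F ar (Set Q × Set Q)) :=
  { ρ | ∃ (f : F) (SP : Fin (ar f) → Set Q × Set Q) (P1 P2 : Set Q),
      P1 ⊆ (⋃ i : Fin (ar f), oneStep Γ' (Sum.inl f)
              (fun (j : Fin (ar f)) => if j = i then (SP j).2 else (SP j).1)) ∧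
      (∀ (i : Fin (ar f)), ∀ q ∈ (SP i).2,
        (P1 ∩ oneStep Γ' (Sum.inl f) (fun (j : Fin (ar f)) => if j = i then {q} else (SP j).1)).Nonempty) ∧
      ((LhsMatch Rg enc2 (Sum.inl f) (fun i => (SP i).1) ∧ P2.Nonempty ∧
          P2 ⊆ oneStep Γ' (Sum.inr f) (fun i => (SP i).1)) ∨
       (¬ LhsMatch Rg enc2 (Sum.inl f) (fun i => (SP i).1) ∧ P2 = (∅ : Set Q))) ∧
      ρ = ⟨f, SP, (oneStep Γ' (Sum.inl f) (fun i => (SP i).1), P1 ∪ P2)⟩ }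

/-- The automaton `𝒟'(ℛ,𝒮)`: final states are the pairs `[S,P]` with
`S ∩ Q_f' ≠ ∅` and `P ⊆ Q_f`. -/
def DAutomatonRS {F : Type} {ar : F → ℕ} {Q : Type} (Rg : TRS (F ⊕ F) (arC ar))
    (Γ' : Set (TARule (F ⊕ F) (arC ar) Q)) (enc2 : Term (F ⊕ F) (arC ar) → Q)
    (Qf' Qf : Set Q) : TreeAutomaton F ar (Set Q × Set Q) where
  trans := DTransRS Rg Γ' enc2
  final := { SP | (SP.1 ∩ Qf').Nonempty ∧ SP.2 ⊆ Qf }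

section Aux

variable {F : Type} {ar : F → ℕ}

lemma Term.ground_app_iff {f : F} {ts : Fin (ar f) → Term F ar} :
    (Term.app f ts).Ground ↔ ∀ i, (ts i).Ground := by
  constructor
  · intro h i
    have := h
    simp only [Term.Ground, Term.vars] at this ⊢
    rw [Finset.eq_empty_iff_forall_notMem] at this ⊢
    intro n hn
    exact this n (Finset.mem_biUnion.2 ⟨i, Finset.mem_univ i, hn⟩)
  · intro h
    simp only [Term.Ground, Term.vars]
    rw [Finset.eq_empty_iff_forall_notMem]
    intro n hn
    obtain ⟨i, _, hi⟩ := Finset.mem_biUnion.1 hn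
    exact absurd hi (by rw [h i]; exact Finset.notMem_empty n)

lemma Term.subtermAt_append (p q : List ℕ) (t : Term F ar) :
    t.subtermAt (p ++ q) = (t.subtermAt p).bind (fun s => s.subtermAt q) := by
  induction p generalizing t with
  | nil => simp [Term.subtermAt]
  | cons i p ih =>
    cases t with
    | var n => simp [Term.subtermAt]
    | app f ts =>
      simp only [List.cons_append, Term.subtermAt]
      split
      · exact ih _
      · simp

lemma Term.relabel_subst {G : Type} {arG : G → ℕ} (φ : F → G) (h : ∀ f, arG (φ f) = ar f)
    (σ : ℕ → Term F ar) (t : Term F ar) :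
    (t.subst σ).relabel φ h = (t.relabel φ h).subst (fun n => (σ n).relabel φ h) := by
  induction t with
  | var n => rfl
  | app f ts ih =>
    simp only [Term.subst, Term.relabel]
    congr 1
    funext i
    exact ih _

lemma SR_child {R' : TRS F ar} {g : F} {ss : Fin (ar g) → Term F ar}
    (h : Term.app g ss ∈ SR R') (i : Fin (ar g)) : ss i ∈ SR R' := by
  obtain ⟨lr, hlr, f, ts, hts, j, p, hp⟩ := h
  refine ⟨lr, hlr, f, ts, hts, j, p ++ [i.val], ?_⟩
  rw [Term.subtermAt_append, hp]
  simp only [Option.bind_some, Term.subtermAt, i.isLt, dif_pos]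

end Aux
section Aux2

variable {F : Type} [Fintype F] {ar : F → ℕ} {Q : Type} [Fintype Q] {R S : TRS F ar}

lemma Gamma0_subset_Gammap (C : CrsSetup Q R S) : C.toCSetup.Γ0 ⊆ C.Γ' := by
  intro ρ hρ
  refine Or.inl (Or.inl ?_)
  exact Set.mem_iUnion.2 ⟨0, hρ⟩

lemma reaches_var0 (C : CrsSetup Q R S) (t : Term (F ⊕ F) (arC ar)) (hg : t.Ground) :
    Reaches C.Γ' t (C.enc (Term.var 0)) := by
  induction t with
  | var n => exact absurd hg (by simp [Term.Ground, Term.vars])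
  | app g ss ih =>
    refine Reaches.app (fun i => ih i (Term.ground_app_iff.1 hg i)) ?_
    exact Gamma0_subset_Gammap C (Or.inr (Or.inr ⟨g, rfl⟩))

lemma lemmaB (C : CrsSetup Q R S) (l : Term (F ⊕ F) (arC ar)) (hl : l ∈ SR R.liftC)
    (σ : ℕ → Term (F ⊕ F) (arC ar)) (hg : (l.subst σ).Ground) :
    Reaches C.Γ' (l.subst σ) (C.enc2 (stPattern l)) := by
  induction l with
  | var n =>
    show Reaches C.Γ' (σ n) (C.enc2 (Term.var 0))
    rw [C.hx]
    exact reaches_var0 C (σ n) hg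
  | app g ss ih =>
    show Reaches C.Γ' (Term.app g fun i => (ss i).subst σ) (C.enc2 (Term.app g ss))
    refine Reaches.app (qs := fun i => C.enc2 (stPattern (ss i)))
      (fun i => ih i (SR_child hl i) (Term.ground_app_iff.1 hg i)) ?_
    exact Or.inl (Or.inr ⟨g, ss, hl, rfl⟩)

lemma lemmaA (C : CrsSetup Q R S) (s : Term F ar) (Sst P : Set Q)
    (h : Reaches (DTransRS R.liftC C.Γ' C.enc2) s (Sst, P)) :
    Sst = { q | Reaches C.Γ' (liftC s) q } := by
  induction s generalizing Sst P with
  | var n => nomatch h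
  | app f ts ih =>
    cases h with
    | app hargs hrule =>
      rename_i qs
      obtain ⟨f', SP, P1, P2, hP1, hcov, hP2, heq⟩ := hrule
      obtain ⟨rfl, h2⟩ := Sigma.mk.inj_iff.1 heq
      rw [heq_iff_eq, Prod.mk.injEq] at h2
      obtain ⟨rfl, h3⟩ := h2
      rw [Prod.mk.injEq] at h3
      obtain ⟨hS, hP⟩ := h3
      have hSP : ∀ (i : Fin (ar f)) (q : Q), q ∈ (qs i).1 ↔ Reaches C.Γ' (liftC (ts i)) q :=
        fun i q => Set.ext_iff.1 (ih i ((qs i).1) ((qs i).2) (hargs i)) q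
      rw [hS]
      ext q
      constructor
      · rintro ⟨qs', hqs', hr⟩
        exact Reaches.app (fun i => (hSP i (qs' i)).1 (hqs' i)) hr
      · intro hq
        have hq' : Reaches C.Γ' (Term.app (Sum.inl f) fun i => liftC (ts i)) q := hq
        cases hq' with
        | app hargs' hr' =>
          rename_i qs'
          exact ⟨qs', fun i => (hSP i (qs' i)).2 (hargs' i), hr'⟩

end Aux2
lemma ground_liftC {F : Type} {ar : F → ℕ} {t : Term F ar} (hg : t.Ground) :
    (liftC t).Ground := by
  induction t with
  | var n => exact hg
  | app f ts ih =>
    rw [Term.ground_app_iff] at hg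
    show (Term.app (Sum.inl f) fun i => liftC (ts (Fin.cast rfl i))).Ground
    rw [Term.ground_app_iff]
    intro i
    exact ih _ (hg _)

lemma Term.subtermAt_nil {F : Type} {ar : F → ℕ} (t : Term F ar) :
    t.subtermAt [] = some t := by
  cases t <;> rfl
/-- Let `ℛ` and `𝒮` be linear growing TRSs over `𝓕` and `𝒟'(ℛ,𝒮)`
the powerset-pair automaton built from `𝒞'_{RS_{𝒮°}}(ℛ)`.  For every `s ∈ 𝒯(𝓕)`: if
`s →_{Γ_{𝒟'}}* [S,P]` then for every redex position `p` of `s` there is a state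
`q ∈ P` with `q ∈ s[(s|_p)°]_p↓`. -/
theorem statement15 {F : Type} [Fintype F] {ar : F → ℕ} {Q : Type} [Fintype Q]
    (R S : TRS F ar) (hRlin : R.IsLinear) (hRgrow : R.Growing)
    (hSlin : S.IsLinear) (hSgrow : S.Growing)
    (C : CrsSetup Q R S)
    (s : Term F ar) (hs : s.Ground) (Sst P : Set Q)
    (h : Reaches (DTransRS R.liftC C.Γ' C.enc2) s (Sst, P))
    (p : List ℕ) (u : Term F ar) (hpu : s.subtermAt p = some u) (hu : R.IsRedex u) :
    ∃ v, (liftC s).replaceAt p (circTm u) = some v ∧ ∃ q ∈ P, Reaches C.Γ' v q := by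
  revert hu hpu h hs
  revert u p P Sst
  induction s with
  | var n =>
    intro Sst P p u hs h hpu hu
    nomatch h
  | app f ts ih =>
    intro Sst P p u hs h hpu hu
    cases h with
    | app hargs hrule =>
      rename_i qs
      obtain ⟨f', SP, P1, P2, hP1, hcov, hP2, heq⟩ := hrule
      obtain ⟨rfl, h2⟩ := Sigma.mk.inj_iff.1 heq
      rw [heq_iff_eq, Prod.mk.injEq] at h2
      obtain ⟨rfl, h3⟩ := h2
      rw [Prod.mk.injEq] at h3
      obtain ⟨hS, hP⟩ := h3
      have hSP : ∀ (i : Fin (ar f)) (q : Q), q ∈ (qs i).1 ↔ Reaches C.Γ' (liftC (ts i)) q :=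
        fun i q => Set.ext_iff.1 (lemmaA C (ts i) ((qs i).1) ((qs i).2) (hargs i)) q
      cases p with
      | nil =>
        obtain rfl : Term.app f ts = u := Option.some.inj hpu
        obtain ⟨⟨l, r⟩, hlr, σ, hσ⟩ := hu
        cases l with
        | var n => exact absurd rfl (R.lhs_not_var (Term.var n, r) hlr n)
        | app f0 ls =>
          simp only [Term.subst] at hσ
          injection hσ with hf hts
          subst hf
          rw [heq_iff_eq] at hts
          have hSR : ∀ i : Fin (ar f), liftC (ls i) ∈ SR R.liftC := by
            intro i
            exact ⟨(Term.relabel Sum.inl (fun _ => rfl) (Term.app f ls),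
                     Term.relabel Sum.inl (fun _ => rfl) r), ⟨(Term.app f ls, r), hlr, rfl⟩,
                    Sum.inl f, fun j => Term.relabel Sum.inl (fun _ => rfl) (ls (Fin.cast rfl j)),
                    rfl, i, [], Term.subtermAt_nil _⟩
          have hreach : ∀ i : Fin (ar f),
              Reaches C.Γ' (liftC (ts i)) (C.enc2 (stPattern (liftC (ls i)))) := by
            intro i
            have heqt : liftC (ts i) = (liftC (ls i)).subst (fun n => liftC (σ n)) := by
              rw [hts]
              exact Term.relabel_subst _ _ _ _
            rw [heqt]
            refine lemmaB C _ (hSR i) _ ?_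
            rw [← heqt]
            exact ground_liftC (Term.ground_app_iff.1 hs i)
          have hLM : LhsMatch R.liftC C.enc2 (Sum.inl f) (fun i => (qs i).1) := by
            refine ⟨fun j => Term.relabel Sum.inl (fun _ => rfl) (ls (Fin.cast rfl j)),
                    Term.relabel Sum.inl (fun _ => rfl) r,
                    ⟨(Term.app f ls, r), hlr, rfl⟩, ?_⟩
            intro j
            exact (hSP j _).2 (hreach j)
          rcases hP2 with ⟨_, ⟨q0, hq0⟩, hsub⟩ | ⟨hn, _⟩
          · refine ⟨circTm (Term.app f ts), rfl, q0, by rw [hP]; exact Or.inr hq0, ?_⟩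
            obtain ⟨qs', hqs', hr⟩ := hsub hq0
            show Reaches C.Γ' (Term.app (Sum.inr f) fun i => liftC (ts i)) q0
            exact Reaches.app (fun i => (hSP i (qs' i)).1 (hqs' i)) hr
          · exact absurd hLM hn
      | cons i p' =>
        rw [Term.subtermAt] at hpu
        split at hpu
        case isFalse => exact absurd hpu (by simp)
        case isTrue hlt =>
          obtain ⟨v_i, hrep_i, q_i, hq_i, hre_i⟩ :=
            ih ⟨i, hlt⟩ ((qs ⟨i, hlt⟩).1) ((qs ⟨i, hlt⟩).2) p' u
              (Term.ground_app_iff.1 hs ⟨i, hlt⟩) (hargs ⟨i, hlt⟩) hpu hu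
          obtain ⟨q0, hq0P1, qs', hqs', hr⟩ := hcov ⟨i, hlt⟩ q_i hq_i
          have hlt' : i < arC ar (Sum.inl f) := hlt
          have key : (liftC (Term.app f ts)).replaceAt (i :: p') (circTm u) =
              ((liftC (ts ⟨i, hlt⟩)).replaceAt p' (circTm u)).map
                (fun s => Term.app (Sum.inl f)
                  (Function.update
                    (fun j : Fin (arC ar (Sum.inl f)) => liftC (ts (Fin.cast rfl j)))
                    ⟨i, hlt'⟩ s)) := by
            show (Term.app (Sum.inl f)
                (fun j : Fin (arC ar (Sum.inl f)) => liftC (ts (Fin.cast rfl j)))).replaceAt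
                  (i :: p') (circTm u) = _
            rw [Term.replaceAt, dif_pos hlt']
            rfl
          refine ⟨Term.app (Sum.inl f)
              (Function.update
                (fun j : Fin (arC ar (Sum.inl f)) => liftC (ts (Fin.cast rfl j)))
                ⟨i, hlt'⟩ v_i), ?_, q0, by rw [hP]; exact Or.inl hq0P1, ?_⟩
          · rw [key, hrep_i]
            rfl
          · refine Reaches.app (qs := qs') ?_ hr
            intro j
            rw [Function.update_apply]
            have h0 : qs' j ∈ (fun (j : Fin (ar f)) => if j = (⟨i, hlt⟩ : Fin (ar f)) then ({q_i} : Set Q)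
                else (qs j).1) j := hqs' j
            beta_reduce at h0
            by_cases hj : j = (⟨i, hlt'⟩ : Fin (arC ar (Sum.inl f)))
            · rw [if_pos hj]
              have hj2 : @Eq (Fin (ar f)) j ⟨i, hlt⟩ := hj
              rw [if_pos hj2] at h0
              obtain rfl : qs' j = q_i := h0
              exact hre_i
            · rw [if_neg hj]
              have hj2 : ¬ @Eq (Fin (ar f)) j ⟨i, hlt⟩ := fun hh => hj hh
              rw [if_neg hj2] at h0
              exact (hSP j (qs' j)).1 h0
end

section
/- Let ℛ and 𝒮 be linear growing TRSs over 𝓕 and let 𝒟'(ℛ,𝒮) be the powerset-pair automaton built from 𝒞'_{RS_{𝒮°}}(ℛ). Let s ∈ 𝒯(𝓕) and let P ⊆ ⋃_{p ∈ ℛ(s)} s[(s|_p)°]_p↓ be a set of states such that P ∩ s[(s|_p)°]_p↓ ≠ ∅ for every redex position p ∈ ℛ(s). Then s →_{Γ_{𝒟'}}* [S,P] where S = s↓. -/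
set_option maxHeartbeats 1000000

/-! ## Auxiliary lemmas for Statement 16 -/

section Aux16

namespace Term

variable {F : Type} {ar : F → ℕ}

lemma ground_app {f : F} {ts : Fin (ar f) → Term F ar} (h : (Term.app f ts).Ground)
    (i : Fin (ar f)) : (ts i).Ground := by
  rw [Ground, Finset.eq_empty_iff_forall_notMem]
  intro n hn
  rw [Ground, Finset.eq_empty_iff_forall_notMem] at h
  exact h n (by
    simp only [vars, Finset.mem_biUnion, Finset.mem_univ, true_and]
    exact ⟨i, hn⟩)

lemma count_pos_of_mem_vars {n : ℕ} {t : Term F ar} (h : n ∈ t.vars) : 0 < t.count n := by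
  induction t with
  | var m =>
      simp only [vars, Finset.mem_singleton] at h
      simp [count, h]
  | app f ts ih =>
      simp only [vars, Finset.mem_biUnion, Finset.mem_univ, true_and] at h
      obtain ⟨i, hi⟩ := h
      calc 0 < (ts i).count n := ih i hi
        _ ≤ (Term.app f ts).count n :=
          Finset.single_le_sum (f := fun j => (ts j).count n)
            (fun _ _ => Nat.zero_le _) (Finset.mem_univ i)

lemma linear_arg {f : F} {ts : Fin (ar f) → Term F ar} (h : (Term.app f ts).Linear)
    (i : Fin (ar f)) : (ts i).Linear := fun n =>
  le_trans (Finset.single_le_sum (f := fun j => (ts j).count n)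
    (fun _ _ => Nat.zero_le _) (Finset.mem_univ i)) (h n)

lemma linear_pair {f : F} {ts : Fin (ar f) → Term F ar} (hlin : (Term.app f ts).Linear)
    {i j : Fin (ar f)} (hij : i ≠ j) {n : ℕ} (hi : n ∈ (ts i).vars)
    (hj : n ∈ (ts j).vars) : False := by
  have h1 := count_pos_of_mem_vars hi
  have h2 := count_pos_of_mem_vars hj
  have h3 : (Term.app f ts).count n ≤ 1 := hlin n
  have h4 : (Term.app f ts).count n = ∑ k, (ts k).count n := rfl
  have h5 : 2 ≤ ∑ k, (ts k).count n := by
    calc 2 ≤ (ts i).count n + (ts j).count n := by omega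
      _ = ∑ k ∈ ({i, j} : Finset (Fin (ar f))), (ts k).count n :=
        (Finset.sum_pair (f := fun k => (ts k).count n) hij).symm
      _ ≤ ∑ k, (ts k).count n :=
        Finset.sum_le_sum_of_subset (Finset.subset_univ _)
  omega

lemma subst_congr {σ σ' : ℕ → Term F ar} {t : Term F ar}
    (h : ∀ n ∈ t.vars, σ n = σ' n) : t.subst σ = t.subst σ' := by
  induction t with
  | var n => exact h n (by simp [vars])
  | app f ts ih =>
      show Term.app f (fun i => (ts i).subst σ) = Term.app f (fun i => (ts i).subst σ')
      congr 1
      funext i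
      exact ih i (fun n hn => h n (by
        simp only [vars, Finset.mem_biUnion, Finset.mem_univ, true_and]
        exact ⟨i, hn⟩))

lemma patch {f : F} {ts : Fin (ar f) → Term F ar} (hlin : (Term.app f ts).Linear)
    (ws : Fin (ar f) → Term F ar) (hex : ∀ i, ∃ σi, ws i = (ts i).subst σi) :
    ∃ σ : ℕ → Term F ar, ∀ i, ws i = (ts i).subst σ := by
  classical
  choose σs hσs using hex
  refine ⟨fun n => if h : ∃ i, n ∈ (ts i).vars then σs h.choose n else Term.var 0,
    fun i => ?_⟩
  rw [hσs i]
  apply subst_congr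
  intro n hn
  have hex' : ∃ j, n ∈ (ts j).vars := ⟨i, hn⟩
  show σs i n = if h : ∃ j, n ∈ (ts j).vars then σs h.choose n else Term.var 0
  rw [dif_pos hex']
  obtain rfl : hex'.choose = i := by
    by_contra hne
    exact linear_pair hlin hne hex'.choose_spec hn
  rfl

lemma subtermAt_nil_s16 (t : Term F ar) : t.subtermAt [] = some t := by
  cases t <;> rfl

lemma replaceAt_nil (t u : Term F ar) : t.replaceAt [] u = some u := by
  cases t <;> rfl

lemma subtermAt_append_s16 : ∀ (p q : List ℕ) (t : Term F ar),
    t.subtermAt (p ++ q) = (t.subtermAt p).bind (fun u => u.subtermAt q)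
  | [], q, t => by rw [List.nil_append, subtermAt_nil_s16, Option.bind_some]
  | i :: p, q, Term.var n => rfl
  | i :: p, q, Term.app f ts => by
      simp only [List.cons_append, subtermAt]
      split
      · exact subtermAt_append_s16 p q _
      · rfl

lemma IsSubtermOf.trans {a b c : Term F ar} (h1 : a.IsSubtermOf b)
    (h2 : b.IsSubtermOf c) : a.IsSubtermOf c := by
  obtain ⟨p, hp⟩ := h1
  obtain ⟨q, hq⟩ := h2
  exact ⟨q ++ p, by rw [subtermAt_append_s16, hq]; exact hp⟩

lemma subtermAt_arg {f : F} {ts : Fin (ar f) → Term F ar} (i : Fin (ar f)) :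
    (Term.app f ts).subtermAt [i.val] = some (ts i) := by
  simp only [subtermAt]
  rw [dif_pos i.isLt]

end Term

lemma SR_closed {G : Type} {arG : G → ℕ} {Rg : TRS G arG} {s u : Term G arG}
    (hs : s ∈ SR Rg) (hu : u.IsSubtermOf s) : u ∈ SR Rg := by
  obtain ⟨lr, hlr, f, ts, h1, i, h2⟩ := hs
  exact ⟨lr, hlr, f, ts, h1, i, hu.trans h2⟩

lemma lhs_arg_mem_SR {G : Type} {arG : G → ℕ} {Rg : TRS G arG} {g : G}
    {ls : Fin (arG g) → Term G arG} {r : Term G arG}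
    (h : (Term.app g ls, r) ∈ Rg.rules) (i : Fin (arG g)) : ls i ∈ SR Rg :=
  ⟨(Term.app g ls, r), h, g, ls, rfl, i, ⟨[], Term.subtermAt_nil_s16 _⟩⟩

section LiftC

variable {F : Type} {ar : F → ℕ}

lemma liftC_var (n : ℕ) : liftC (F := F) (ar := ar) (Term.var n) = Term.var n := rfl

lemma liftC_app {f : F} {ts : Fin (ar f) → Term F ar} :
    liftC (Term.app f ts) = Term.app (Sum.inl f) (fun i => liftC (ts i)) := rfl

lemma circTm_app {f : F} {ts : Fin (ar f) → Term F ar} :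
    circTm (Term.app f ts) = Term.app (Sum.inr f) (fun i => liftC (ts i)) := rfl

lemma liftC_vars : ∀ t : Term F ar, (liftC t).vars = t.vars := by
  intro t
  induction t with
  | var n => rfl
  | app f ts ih =>
      rw [liftC_app]
      show Finset.univ.biUnion (fun i => (liftC (ts i)).vars) =
        Finset.univ.biUnion (fun i => (ts i).vars)
      exact Finset.biUnion_congr rfl (fun i _ => ih i)

lemma liftC_ground {t : Term F ar} (h : t.Ground) : (liftC t).Ground := by
  rw [Term.Ground, liftC_vars]; exact h

end LiftC

section Automata

lemma dn_app {G : Type} {arG : G → ℕ} {Q : Type} {Γ : Set (TARule G arG Q)} {g : G}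
    {ws : Fin (arG g) → Term G arG} :
    dn Γ (Term.app g ws) = oneStep Γ g (fun i => dn Γ (ws i)) := by
  ext q
  constructor
  · intro h
    cases h with
    | app h1 h2 => exact ⟨_, h1, h2⟩
  · rintro ⟨qs, h1, h2⟩
    exact Reaches.app h1 h2

lemma oneStep_mono {G : Type} {arG : G → ℕ} {Q : Type} {Γ : Set (TARule G arG Q)}
    {g : G} {Ss Ss' : Fin (arG g) → Set Q} (h : ∀ i, Ss i ⊆ Ss' i) :
    oneStep Γ g Ss ⊆ oneStep Γ g Ss' := by
  rintro q ⟨qs, h1, h2⟩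
  exact ⟨qs, fun i => h i (h1 i), h2⟩

end Automata

end Aux16

section Aux16b

lemma reachesT_target {G : Type} {arG : G → ℕ} {Q : Type} {Γ : Set (TARule G arG Q)}
    {θ : ℕ → Q} {r : Term G arG} {q : Q} {W : Set Q} (h : ReachesT Γ θ r q)
    (hΓ : ∀ ρ ∈ Γ, ρ.2.2 ∈ W) (hθ : ∀ n ∈ r.vars, θ n ∈ W) : q ∈ W := by
  induction h with
  | var n => exact hθ n (by simp [Term.vars])
  | app h1 h2 ih => exact hΓ _ h2

lemma Γ0_sub_Γsat {G : Type} [Fintype G] {arG : G → ℕ} {Q : Type} [Fintype Q]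
    {Rg : TRS G arG} {T : Set (Term G arG)} (C : CSetup Q Rg T) : C.Γ0 ⊆ C.Γsat :=
  fun ρ h => Set.mem_iUnion.2 ⟨0, h⟩

lemma Γsat_target {G : Type} [Fintype G] {arG : G → ℕ} {Q : Type} [Fintype Q]
    {Rg : TRS G arG} {T : Set (Term G arG)} (C : CSetup Q Rg T) :
    ∀ ρ ∈ C.Γsat, ρ.2.2 ∈ C.Qstates := by
  have h0 : ∀ ρ ∈ C.Γ0, ρ.2.2 ∈ C.Qstates := by
    rintro ρ (h | h | h)
    · exact Or.inl (C.hAstates ρ h).1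
    · obtain ⟨f, ts, hSR, rfl⟩ := h
      exact Or.inr ⟨Term.app f ts, Or.inl ⟨_, hSR, rfl⟩, rfl⟩
    · obtain ⟨f, rfl⟩ := h
      exact Or.inr ⟨Term.var 0, Or.inr rfl, rfl⟩
  have key : ∀ n, ∀ ρ ∈ (satStep Rg C.enc C.Qstates)^[n] C.Γ0, ρ.2.2 ∈ C.Qstates := by
    intro n
    induction n with
    | zero => exact h0
    | succ n ih =>
        rw [Function.iterate_succ_apply']
        rintro ρ (h | h)
        · exact ih ρ h
        · obtain ⟨f, ls, r, θ, q, hrule, hθ, hRT, rfl⟩ := h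
          exact reachesT_target hRT ih hθ
  intro ρ hρ
  obtain ⟨n, hn⟩ := Set.mem_iUnion.1 hρ
  exact key n ρ hn

variable {F : Type} [Fintype F] {ar : F → ℕ} {Q : Type} [Fintype Q] {R S : TRS F ar}

lemma BProp_sub_Γ' (C : CrsSetup Q R S) : BProp C.enc ⊆ C.Γ' :=
  fun ρ h => Or.inl (Or.inl (Γ0_sub_Γsat C.toCSetup (Or.inr (Or.inr h))))

lemma BMatch2_sub_Γ' (C : CrsSetup Q R S) : BMatch R.liftC C.enc2 ⊆ C.Γ' :=
  fun ρ h => Or.inl (Or.inr h)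

lemma reaches_x (C : CrsSetup Q R S) :
    ∀ t : Term (F ⊕ F) (arC ar), t.Ground → Reaches C.Γ' t (C.enc (Term.var 0)) := by
  intro t
  induction t with
  | var n =>
      intro h
      exact absurd h (by simp [Term.Ground, Term.vars])
  | app g ws ih =>
      intro h
      exact Reaches.app (qs := fun _ => C.enc (Term.var 0))
        (fun i => ih i (Term.ground_app h i)) (BProp_sub_Γ' C ⟨g, rfl⟩)

lemma completeness (C : CrsSetup Q R S) : ∀ (t : Term F ar) (σ : ℕ → Term F ar),
    (t.subst σ).Ground → (liftC t ∈ SR R.liftC ∨ ∃ n, t = Term.var n) →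
    Reaches C.Γ' (liftC (t.subst σ)) (C.enc2 (stPattern (liftC t))) := by
  intro t
  induction t with
  | var n =>
      intro σ hg _
      rw [show stPattern (liftC (F := F) (ar := ar) (Term.var n)) = Term.var 0 from rfl,
        C.hx]
      exact reaches_x C _ (liftC_ground hg)
  | app g us ih =>
      intro σ hg hSR
      have hSR' : liftC (Term.app g us) ∈ SR R.liftC := by
        rcases hSR with h | ⟨n, h⟩
        · exact h
        · cases h
      rw [show (Term.app g us).subst σ = Term.app g (fun i => (us i).subst σ) from rfl]
        at hg ⊢
      rw [liftC_app]
      refine Reaches.app (f := Sum.inl g) (ts := fun i => liftC ((us i).subst σ))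
        (qs := fun i => C.enc2 (stPattern (liftC (us i)))) (fun i => ?_) ?_
      · exact ih i σ (Term.ground_app hg i)
          (Or.inl (SR_closed hSR' ⟨[i.val], by
            rw [liftC_app]
            exact Term.subtermAt_arg (f := Sum.inl g) (ts := fun j => liftC (us j)) i⟩))
      · exact BMatch2_sub_Γ' C ⟨Sum.inl g, fun i => liftC (us i), by
          rw [← liftC_app]; exact hSR', rfl⟩

lemma classify (C : CrsSetup Q R S) {g : F ⊕ F} {us : Fin (arC ar g) → Term (F ⊕ F) (arC ar)}
    (hSR : Term.app g us ∈ SR R.liftC) {ρ : TARule (F ⊕ F) (arC ar) Q} (hρ : ρ ∈ C.Γ')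
    (ht : ρ.2.2 = C.enc2 (Term.app g us)) : ρ ∈ BMatch R.liftC C.enc2 := by
  have hmem2 : C.enc2 (Term.app g us) ∈ C.enc2 '' (BStateSet R.liftC \ {Term.var 0}) :=
    ⟨Term.app g us, ⟨Or.inl ⟨_, hSR, rfl⟩, fun h => by simp at h⟩, rfl⟩
  rcases hρ with (h | h) | h
  · exfalso
    have h1 := Γsat_target C.toCSetup ρ h
    rw [ht] at h1
    have h2 : C.enc2 (Term.app g us) ∈ (C.enc2 '' (BStateSet R.liftC \ {Term.var 0})) ∩
        (C.QA ∪ C.enc '' BStateSet R.liftC) := ⟨hmem2, h1⟩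
    rw [C.hfresh2] at h2
    exact h2
  · exact h
  · exfalso
    have hst : C.enc2 (Term.app g us) ∈ statesOf C.Etrans := ⟨ρ, h, Or.inl ht⟩
    have h2 : C.enc2 (Term.app g us) ∈ statesOf C.Etrans ∩
        (C.QA ∪ C.enc '' BStateSet R.liftC ∪
          C.enc2 '' (BStateSet R.liftC \ {Term.var 0})) := ⟨hst, Or.inr hmem2⟩
    rw [C.hEfresh] at h2
    exact h2

lemma soundness (C : CrsSetup Q R S) : ∀ t w : Term F ar, t.Linear →
    (liftC t ∈ SR R.liftC ∨ ∃ n, t = Term.var n) →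
    Reaches C.Γ' (liftC w) (C.enc2 (stPattern (liftC t))) → ∃ σ, w = t.subst σ := by
  intro t
  induction t with
  | var n => exact fun w _ _ _ => ⟨fun _ => w, rfl⟩
  | app g us ih =>
      intro w hlin hSR hreach
      have hSR' : liftC (Term.app g us) ∈ SR R.liftC := by
        rcases hSR with h | ⟨n, h⟩
        · exact h
        · cases h
      have hSR'' : Term.app (Sum.inl g) (fun i => liftC (us i)) ∈ SR R.liftC := by
        rw [← liftC_app]; exact hSR'
      cases w with
      | var m =>
          rw [liftC_var] at hreach
          cases hreach
      | app g2 ws =>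
          rw [liftC_app] at hreach
          cases hreach with
          | app hargs hrule =>
              rename_i qs
              have hcl := classify C hSR'' hrule rfl
              obtain ⟨g', tsP, hSRP, heq⟩ := hcl
              have h1 : (Sum.inl g2 : F ⊕ F) = g' := congrArg Sigma.fst heq
              subst h1
              have heq2 : ((qs, C.enc2 (stPattern (liftC (Term.app g us)))) :
                  (Fin (arC ar (Sum.inl g2)) → Q) × Q) =
                  (fun i => C.enc2 (stPattern (tsP i)), C.enc2 (Term.app (Sum.inl g2) tsP)) := by
                have := (Sigma.mk.inj_iff.1 heq).2
                exact eq_of_heq this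
              have hqs : qs = fun i => C.enc2 (stPattern (tsP i)) :=
                congrArg Prod.fst heq2
              have htgt : C.enc2 (stPattern (liftC (Term.app g us))) =
                  C.enc2 (Term.app (Sum.inl g2) tsP) := congrArg Prod.snd heq2
              have hBmem1 : (Term.app (Sum.inl g) (fun i => liftC (us i)) : Term (F ⊕ F) (arC ar))
                  ∈ BStateSet R.liftC := Or.inl ⟨_, hSR'', rfl⟩
              have hBmem2 : (Term.app (Sum.inl g2) tsP : Term (F ⊕ F) (arC ar))
                  ∈ BStateSet R.liftC := Or.inl ⟨_, hSRP, rfl⟩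
              have hpatt : (Term.app (Sum.inl g) (fun i => liftC (us i)) : Term (F ⊕ F) (arC ar))
                  = Term.app (Sum.inl g2) tsP := C.henc2 hBmem1 hBmem2 htgt
              injection hpatt with h2 h3
              obtain rfl : g = g2 := Sum.inl.inj h2
              have h3' : (fun i => liftC (us i)) = tsP := eq_of_heq h3
              subst h3'
              have hexσ : ∀ i, ∃ σi, ws i = (us i).subst σi := by
                intro i
                refine ih i (ws i) (Term.linear_arg hlin i)
                  (Or.inl (SR_closed hSR' ⟨[i.val], by
                    rw [liftC_app]
                    exact Term.subtermAt_arg (f := Sum.inl g) (ts := fun j => liftC (us j)) i⟩)) ?_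
                have := hargs i
                rw [hqs] at this
                exact this
              obtain ⟨σ, hσ⟩ := Term.patch hlin ws hexσ
              exact ⟨σ, by
                rw [show (Term.app g us).subst σ = Term.app g (fun i => (us i).subst σ)
                  from rfl]
                congr 1
                funext i
                exact hσ i⟩

end Aux16b

section Aux16c

variable {F : Type} [Fintype F] {ar : F → ℕ} {Q : Type} [Fintype Q] {R S : TRS F ar}

/-- The set `Pᵢ` used in the proof of Statement 16. -/
def PiF (C : CrsSetup Q R S) (f : F) (ts : Fin (ar f) → Term F ar) (P : Set Q) :
    Fin (ar f) → Set Q :=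
  fun i => { q : Q |
    (∃ p u, (ts i).subtermAt p = some u ∧ R.IsRedex u ∧
      ∃ v, (liftC (ts i)).replaceAt p (circTm u) = some v ∧ Reaches C.Γ' v q) ∧
    ∃ q' ∈ P, q' ∈ oneStep C.Γ' (Sum.inl f)
      (fun (j : Fin (ar f)) => if j = i then {q} else dn C.Γ' (liftC (ts j))) }

lemma main16 (C : CrsSetup Q R S) (hRlin : R.IsLinear) :
    ∀ s : Term F ar, s.Ground → ∀ P : Set Q,
    (∀ q ∈ P, ∃ p u, s.subtermAt p = some u ∧ R.IsRedex u ∧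
        ∃ v, (liftC s).replaceAt p (circTm u) = some v ∧ Reaches C.Γ' v q) →
    (∀ p u, s.subtermAt p = some u → R.IsRedex u →
        ∃ v, (liftC s).replaceAt p (circTm u) = some v ∧ ∃ q ∈ P, Reaches C.Γ' v q) →
    Reaches (DTransRS R.liftC C.Γ' C.enc2) s (dn C.Γ' (liftC s), P) := by
  intro s
  induction s with
  | var n =>
      intro hg
      exact absurd hg (by simp [Term.Ground, Term.vars])
  | app f ts ih =>
      intro hg P hsub hmeet
      -- decomposition helpers
      have hAs : ∀ (i : Fin (ar f)) (p : List ℕ) (u : Term F ar),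
          (ts i).subtermAt p = some u →
          (Term.app f ts).subtermAt (i.val :: p) = some u := by
        intro i p u h
        simp only [Term.subtermAt]
        rw [dif_pos i.isLt]
        exact h
      have hsubb : ∀ (n : ℕ) (p : List ℕ) (u : Term F ar),
          (Term.app f ts).subtermAt (n :: p) = some u →
          ∃ h : n < ar f, (ts ⟨n, h⟩).subtermAt p = some u := by
        intro n p u h
        simp only [Term.subtermAt] at h
        by_cases hn : n < ar f
        · rw [dif_pos hn] at h; exact ⟨hn, h⟩
        · rw [dif_neg hn] at h; cases h
      have hrepb : ∀ (i : Fin (ar f)) (p : List ℕ) (x v : Term (F ⊕ F) (arC ar)),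
          (liftC (Term.app f ts)).replaceAt (i.val :: p) x = some v →
          ∃ vi, (liftC (ts i)).replaceAt p x = some vi ∧
            v = Term.app (Sum.inl f) (Function.update (fun j => liftC (ts j)) i vi) := by
        intro i p x v h
        rw [liftC_app] at h
        simp only [Term.replaceAt] at h
        rw [dif_pos (show i.val < arC ar (Sum.inl f) from i.isLt)] at h
        rw [Option.map_eq_some_iff] at h
        obtain ⟨vi, h1, h2⟩ := h
        exact ⟨vi, h1, h2.symm⟩
      -- the induction hypothesis applied to the arguments
      have hih : ∀ i, Reaches (DTransRS R.liftC C.Γ' C.enc2) (ts i)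
          (dn C.Γ' (liftC (ts i)), PiF C f ts P i) := by
        intro i
        refine ih i (Term.ground_app hg i) (PiF C f ts P i) (fun q hq => hq.1) ?_
        intro p u hpt hred
        obtain ⟨v, hv, q', hq'P, hq'r⟩ := hmeet (i.val :: p) u (hAs i p u hpt) hred
        obtain ⟨vi, hvi, rfl⟩ := hrepb i p _ v hv
        cases hq'r with
        | app hargs hrule =>
            rename_i qs
            have hqi : Reaches C.Γ' vi (qs i) := by
              have h := hargs i
              convert h using 2
              exact (Function.update_self i vi (fun j => liftC (ts j))).symm
            refine ⟨vi, hvi, qs i, ⟨⟨p, u, hpt, hred, vi, hvi, hqi⟩,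
              q', hq'P, qs, fun (j : Fin (ar f)) => ?_, hrule⟩, hqi⟩
            show qs j ∈ if @Eq (Fin (ar f)) j i then {qs i} else dn C.Γ' (liftC (ts j))
            by_cases hj : @Eq (Fin (ar f)) j i
            · subst hj
              rw [if_pos rfl]
              rfl
            · rw [if_neg hj]
              have h := hargs j
              exact (congrArg (fun t => Reaches C.Γ' t (qs j)) (Function.update_of_ne (α := Fin (arC ar (Sum.inl f))) hj vi (fun j => liftC (ts j)))).mp h
      -- the condition on P1
      have hcond2 : ∀ (i : Fin (ar f)), ∀ q ∈ PiF C f ts P i,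
          ((P ∩ ⋃ i : Fin (ar f), oneStep C.Γ' (Sum.inl f)
              (fun (j : Fin (ar f)) => if j = i then PiF C f ts P j else dn C.Γ' (liftC (ts j)))) ∩
            oneStep C.Γ' (Sum.inl f)
              (fun (j : Fin (ar f)) => if j = i then {q} else dn C.Γ' (liftC (ts j)))).Nonempty := by
        intro i q hq
        obtain ⟨q', hq'P, hq'one⟩ := hq.2
        refine ⟨q', ⟨hq'P, Set.mem_iUnion.2 ⟨i, ?_⟩⟩, hq'one⟩
        refine oneStep_mono (Γ := C.Γ') (g := Sum.inl f) (fun (j : Fin (ar f)) x hx => ?_) hq'one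
        have hx' : x ∈ if @Eq (Fin (ar f)) j i then ({q} : Set Q) else dn C.Γ' (liftC (ts j)) := hx
        show x ∈ if @Eq (Fin (ar f)) j i then PiF C f ts P j else dn C.Γ' (liftC (ts j))
        by_cases hj : @Eq (Fin (ar f)) j i
        · rw [if_pos hj] at hx' ⊢
          rw [Set.mem_singleton_iff] at hx'
          subst hx'
          rw [hj]
          exact hq
        · rw [if_neg hj] at hx' ⊢
          exact hx'
      have hS1 : dn C.Γ' (liftC (Term.app f ts)) =
          oneStep C.Γ' (Sum.inl f) (fun i => dn C.Γ' (liftC (ts i))) := by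
        rw [liftC_app, dn_app]
      by_cases hred : R.IsRedex (Term.app f ts)
      · -- the root is a redex
        have hmatch : LhsMatch R.liftC C.enc2 (Sum.inl f)
            (fun i => dn C.Γ' (liftC (ts i))) := by
          obtain ⟨lr, hlr, σ, hseq⟩ := hred
          cases hlr1 : lr.1 with
          | var n => exact absurd hlr1 (R.lhs_not_var lr hlr n)
          | app f0 ts0 =>
              rw [hlr1] at hseq
              rw [show (Term.app f0 ts0).subst σ =
                Term.app f0 (fun i => (ts0 i).subst σ) from rfl] at hseq
              injection hseq with h1 h2
              subst h1
              have h2' : ts = fun i => (ts0 i).subst σ := eq_of_heq h2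
              have hrule : (Term.app (Sum.inl f) (fun i => liftC (ts0 i)), liftC lr.2)
                  ∈ R.liftC.rules := ⟨lr, hlr, by
                show (liftC lr.1, liftC lr.2) = _
                rw [hlr1]
                rfl⟩
              refine ⟨fun i => liftC (ts0 i), liftC lr.2, hrule, fun i => ?_⟩
              show Reaches C.Γ' (liftC (ts i)) (C.enc2 (stPattern (liftC (ts0 i))))
              rw [show ts i = (ts0 i).subst σ from congrFun h2' i]
              exact completeness C (ts0 i) σ
                (by rw [← congrFun h2' i]; exact Term.ground_app hg i)
                (Or.inl (lhs_arg_mem_SR hrule i))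
        have hne : (P ∩ oneStep C.Γ' (Sum.inr f)
            (fun i => dn C.Γ' (liftC (ts i)))).Nonempty := by
          obtain ⟨v, hv, q', hq'P, hq'r⟩ := hmeet [] (Term.app f ts)
            (Term.subtermAt_nil_s16 _) hred
          rw [Term.replaceAt_nil] at hv
          obtain rfl := Option.some.inj hv
          have hq'r' : Reaches C.Γ' (Term.app (Sum.inr f) (fun i => liftC (ts i))) q' := by
            rw [← circTm_app]; exact hq'r
          cases hq'r' with
          | app hargs hrule =>
              rename_i qs
              exact ⟨q', hq'P, qs, fun i => hargs i, hrule⟩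
        have h2 : P = (P ∩ ⋃ i : Fin (ar f), oneStep C.Γ' (Sum.inl f)
              (fun (j : Fin (ar f)) => if j = i then PiF C f ts P j else dn C.Γ' (liftC (ts j)))) ∪
            (P ∩ oneStep C.Γ' (Sum.inr f) (fun i => dn C.Γ' (liftC (ts i)))) := by
          apply Set.Subset.antisymm
          · intro q hq
            obtain ⟨p, u, hpu, hredu, v, hv, hr⟩ := hsub q hq
            cases p with
            | nil =>
                rw [Term.subtermAt_nil_s16] at hpu
                obtain rfl := Option.some.inj hpu
                rw [Term.replaceAt_nil] at hv
                obtain rfl := Option.some.inj hv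
                right
                have hr' : Reaches C.Γ' (Term.app (Sum.inr f)
                    (fun i => liftC (ts i))) q := by
                  rw [← circTm_app]; exact hr
                cases hr' with
                | app hargs hrule =>
                    rename_i qs
                    exact ⟨hq, qs, fun i => hargs i, hrule⟩
            | cons n p' =>
                obtain ⟨hn, hpu'⟩ := hsubb n p' u hpu
                obtain ⟨vi, hvi, rfl⟩ := hrepb ⟨n, hn⟩ p' _ v hv
                cases hr with
                | app hargs hrule =>
                    rename_i qs
                    left
                    refine ⟨hq, Set.mem_iUnion.2 ⟨⟨n, hn⟩, qs, fun (j : Fin (ar f)) => ?_, hrule⟩⟩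
                    show qs j ∈ if @Eq (Fin (ar f)) j ⟨n, hn⟩ then PiF C f ts P j
                      else dn C.Γ' (liftC (ts j))
                    by_cases hj : @Eq (Fin (ar f)) j ⟨n, hn⟩
                    · subst hj
                      refine (congrArg (fun S : Set Q => qs _ ∈ S) (if_pos rfl)).mpr ?_
                      have hqi : Reaches C.Γ' vi (qs (⟨n, hn⟩ : Fin (ar f))) := by
                        have h := hargs (⟨n, hn⟩ : Fin (ar f))
                        exact (congrArg (fun t => Reaches C.Γ' t (qs ⟨n, hn⟩)) (Function.update_self (α := Fin (arC ar (Sum.inl f))) (⟨n, hn⟩ : Fin (ar f)) vi (fun j => liftC (ts j)))).mp h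
                      refine ⟨⟨p', u, hpu', hredu, vi, hvi, hqi⟩,
                        q, hq, qs, fun (k : Fin (ar f)) => ?_, hrule⟩
                      show qs k ∈ if @Eq (Fin (ar f)) k ⟨n, hn⟩
                        then ({qs (⟨n, hn⟩ : Fin (ar f))} : Set Q)
                        else dn C.Γ' (liftC (ts k))
                      by_cases hk : @Eq (Fin (ar f)) k ⟨n, hn⟩
                      · rw [if_pos hk, hk]
                        rfl
                      · rw [if_neg hk]
                        have h := hargs k
                        exact (congrArg (fun t => Reaches C.Γ' t (qs k)) (Function.update_of_ne (α := Fin (arC ar (Sum.inl f))) hk vi (fun j => liftC (ts j)))).mp h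
                    · rw [if_neg hj]
                      have h := hargs j
                      exact (congrArg (fun t => Reaches C.Γ' t (qs j)) (Function.update_of_ne (α := Fin (arC ar (Sum.inl f))) hj vi (fun j => liftC (ts j)))).mp h
          · rintro q (hq | hq)
            · exact hq.1
            · exact hq.1
        refine Reaches.app (qs := fun i => (dn C.Γ' (liftC (ts i)), PiF C f ts P i))
          hih ?_
        refine ⟨f, fun i => (dn C.Γ' (liftC (ts i)), PiF C f ts P i),
          P ∩ ⋃ i : Fin (ar f), oneStep C.Γ' (Sum.inl f)
            (fun (j : Fin (ar f)) => if j = i then PiF C f ts P j else dn C.Γ' (liftC (ts j))),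
          P ∩ oneStep C.Γ' (Sum.inr f) (fun i => dn C.Γ' (liftC (ts i))),
          Set.inter_subset_right, hcond2,
          Or.inl ⟨hmatch, hne, Set.inter_subset_right⟩, ?_⟩
        have h3 : (dn C.Γ' (liftC (Term.app f ts)), P) =
            ((oneStep C.Γ' (Sum.inl f) (fun i => dn C.Γ' (liftC (ts i))) : Set Q),
              (P ∩ ⋃ i : Fin (ar f), oneStep C.Γ' (Sum.inl f)
                (fun (j : Fin (ar f)) => if j = i then PiF C f ts P j else dn C.Γ' (liftC (ts j)))) ∪
              (P ∩ oneStep C.Γ' (Sum.inr f) (fun i => dn C.Γ' (liftC (ts i))))) := by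
          rw [hS1]
          exact congrArg _ h2
        exact congrArg (fun z : Set Q × Set Q =>
          (⟨f, fun i => (dn C.Γ' (liftC (ts i)), PiF C f ts P i), z⟩ :
            TARule F ar (Set Q × Set Q))) h3
      · -- the root is not a redex
        have hnm : ¬ LhsMatch R.liftC C.enc2 (Sum.inl f)
            (fun i => dn C.Γ' (liftC (ts i))) := by
          rintro ⟨ls, r, hrule, hmem⟩
          obtain ⟨lr, hlr, heq⟩ := hrule
          have heq1 : liftC lr.1 = Term.app (Sum.inl f) ls := congrArg Prod.fst heq
          apply hred
          cases hlr1 : lr.1 with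
          | var n =>
              rw [hlr1] at heq1
              exact absurd heq1 (fun h => by cases h)
          | app f0 ts0 =>
              rw [hlr1, liftC_app] at heq1
              injection heq1 with h1 h3
              obtain rfl : f = f0 := (Sum.inl.inj h1).symm
              have h3' : (fun i => liftC (ts0 i)) = ls := eq_of_heq h3
              subst h3'
              have hlin0 : (Term.app f ts0).Linear := by
                have h := hRlin.1 lr hlr
                rwa [hlr1] at h
              have hrule' : (Term.app (Sum.inl f) (fun i => liftC (ts0 i)), liftC lr.2)
                  ∈ R.liftC.rules := ⟨lr, hlr, by
                show (liftC lr.1, liftC lr.2) = _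
                rw [hlr1]
                rfl⟩
              have hexσ : ∀ i, ∃ σi, ts i = (ts0 i).subst σi := by
                intro i
                exact soundness C (ts0 i) (ts i) (Term.linear_arg hlin0 i)
                  (Or.inl (lhs_arg_mem_SR hrule' i)) (hmem i)
              obtain ⟨σ, hσ⟩ := Term.patch hlin0 ts hexσ
              refine ⟨lr, hlr, σ, ?_⟩
              rw [hlr1]
              rw [show (Term.app f ts0).subst σ =
                Term.app f (fun i => (ts0 i).subst σ) from rfl]
              congr 1
              funext i
              exact hσ i
        have h2 : P = (P ∩ ⋃ i : Fin (ar f), oneStep C.Γ' (Sum.inl f)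
              (fun (j : Fin (ar f)) => if j = i then PiF C f ts P j else dn C.Γ' (liftC (ts j)))) ∪
            (∅ : Set Q) := by
          rw [Set.union_empty]
          apply Set.Subset.antisymm
          · intro q hq
            obtain ⟨p, u, hpu, hredu, v, hv, hr⟩ := hsub q hq
            cases p with
            | nil =>
                rw [Term.subtermAt_nil_s16] at hpu
                obtain rfl := Option.some.inj hpu
                exact absurd hredu hred
            | cons n p' =>
                obtain ⟨hn, hpu'⟩ := hsubb n p' u hpu
                obtain ⟨vi, hvi, rfl⟩ := hrepb ⟨n, hn⟩ p' _ v hv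
                cases hr with
                | app hargs hrule =>
                    rename_i qs
                    refine ⟨hq, Set.mem_iUnion.2 ⟨⟨n, hn⟩, qs, fun (j : Fin (ar f)) => ?_, hrule⟩⟩
                    show qs j ∈ if @Eq (Fin (ar f)) j ⟨n, hn⟩ then PiF C f ts P j
                      else dn C.Γ' (liftC (ts j))
                    by_cases hj : @Eq (Fin (ar f)) j ⟨n, hn⟩
                    · subst hj
                      refine (congrArg (fun S : Set Q => qs _ ∈ S) (if_pos rfl)).mpr ?_
                      have hqi : Reaches C.Γ' vi (qs (⟨n, hn⟩ : Fin (ar f))) := by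
                        have h := hargs (⟨n, hn⟩ : Fin (ar f))
                        exact (congrArg (fun t => Reaches C.Γ' t (qs ⟨n, hn⟩)) (Function.update_self (α := Fin (arC ar (Sum.inl f))) (⟨n, hn⟩ : Fin (ar f)) vi (fun j => liftC (ts j)))).mp h
                      refine ⟨⟨p', u, hpu', hredu, vi, hvi, hqi⟩,
                        q, hq, qs, fun (k : Fin (ar f)) => ?_, hrule⟩
                      show qs k ∈ if @Eq (Fin (ar f)) k ⟨n, hn⟩
                        then ({qs (⟨n, hn⟩ : Fin (ar f))} : Set Q)
                        else dn C.Γ' (liftC (ts k))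
                      by_cases hk : @Eq (Fin (ar f)) k ⟨n, hn⟩
                      · rw [if_pos hk, hk]
                        rfl
                      · rw [if_neg hk]
                        have h := hargs k
                        exact (congrArg (fun t => Reaches C.Γ' t (qs k)) (Function.update_of_ne (α := Fin (arC ar (Sum.inl f))) hk vi (fun j => liftC (ts j)))).mp h
                    · rw [if_neg hj]
                      have h := hargs j
                      exact (congrArg (fun t => Reaches C.Γ' t (qs j)) (Function.update_of_ne (α := Fin (arC ar (Sum.inl f))) hj vi (fun j => liftC (ts j)))).mp h
          · rintro q ⟨hq, -⟩
            exact hq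
        refine Reaches.app (qs := fun i => (dn C.Γ' (liftC (ts i)), PiF C f ts P i))
          hih ?_
        refine ⟨f, fun i => (dn C.Γ' (liftC (ts i)), PiF C f ts P i),
          P ∩ ⋃ i : Fin (ar f), oneStep C.Γ' (Sum.inl f)
            (fun (j : Fin (ar f)) => if j = i then PiF C f ts P j else dn C.Γ' (liftC (ts j))),
          (∅ : Set Q),
          Set.inter_subset_right, hcond2,
          Or.inr ⟨hnm, rfl⟩, ?_⟩
        have h3 : (dn C.Γ' (liftC (Term.app f ts)), P) =
            ((oneStep C.Γ' (Sum.inl f) (fun i => dn C.Γ' (liftC (ts i))) : Set Q),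
              (P ∩ ⋃ i : Fin (ar f), oneStep C.Γ' (Sum.inl f)
                (fun (j : Fin (ar f)) => if j = i then PiF C f ts P j else dn C.Γ' (liftC (ts j)))) ∪
              (∅ : Set Q)) := by
          rw [hS1]
          exact congrArg _ h2
        exact congrArg (fun z : Set Q × Set Q =>
          (⟨f, fun i => (dn C.Γ' (liftC (ts i)), PiF C f ts P i), z⟩ :
            TARule F ar (Set Q × Set Q))) h3

end Aux16c

/-- Let `ℛ` and `𝒮` be linear growing TRSs over `𝓕` and `𝒟'(ℛ,𝒮)`
the powerset-pair automaton built from `𝒞'_{RS_{𝒮°}}(ℛ)`.  Let `s ∈ 𝒯(𝓕)` and let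
`P ⊆ ⋃_{p ∈ ℛ(s)} s[(s|_p)°]_p↓` be such that `P ∩ s[(s|_p)°]_p↓ ≠ ∅` for every
redex position `p` of `s`.  Then `s →_{Γ_{𝒟'}}* [S,P]` with `S = s↓`. -/
theorem statement16 {F : Type} [Fintype F] {ar : F → ℕ} {Q : Type} [Fintype Q]
    (R S : TRS F ar) (hRlin : R.IsLinear) (hRgrow : R.Growing)
    (hSlin : S.IsLinear) (hSgrow : S.Growing)
    (C : CrsSetup Q R S)
    (s : Term F ar) (hs : s.Ground) (P : Set Q)
    (hsub : ∀ q ∈ P, ∃ p u, s.subtermAt p = some u ∧ R.IsRedex u ∧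
        ∃ v, (liftC s).replaceAt p (circTm u) = some v ∧ Reaches C.Γ' v q)
    (hmeet : ∀ p u, s.subtermAt p = some u → R.IsRedex u →
        ∃ v, (liftC s).replaceAt p (circTm u) = some v ∧ ∃ q ∈ P, Reaches C.Γ' v q) :
    Reaches (DTransRS R.liftC C.Γ' C.enc2) s (dn C.Γ' (liftC s), P) :=
  main16 C hRlin s hs P hsub hmeet
end
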